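/- Let R > 0, l ≥ 1, and let g be an even, bounded, holomorphic function on the strip I_R = {z ∈ ℂ : |Im z| < R}. Then there exists a bounded holomorphic function f on the tube F_R = {λ ∈ ℂ^l : ‖Im λ‖ < R} such that f(λ) = g(s) for every λ ∈ F_R and every s ∈ I_R with s² = λ₁² + ⋯ + λ_l², and moreover sup_{λ ∈ F_R} |f(λ)| ≤ sup_{s ∈ I_R} |g(s)|. -/

import Mathlib

/-!
STATEMENT 4: an even bounded holomorphic function `g` on the strip `I_R` induces a
bounded holomorphic function `f` on the tube `F_R ⊆ ℂ^l` with `f(λ) = g(s)` whenever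
`s² = λ₁² + ⋯ + λ_l²`, and `sup |f| ≤ sup |g|`.
-/

/-- The open horizontal strip `I_R = {z ∈ ℂ : |Im z| < R}`. -/
def openStrip (R : ℝ) : Set ℂ := {z : ℂ | |z.im| < R}

/-- The tube domain `F_R = {λ ∈ ℂ^l : ‖Im λ‖ < R}` (Euclidean norm of the imaginary
part). -/
def tube (l : ℕ) (R : ℝ) : Set (Fin l → ℂ) :=
  {lam | Real.sqrt (∑ i, (lam i).im ^ 2) < R}

/-- Principal complex square root via `cpow`. -/
noncomputable def csqrt (w : ℂ) : ℂ := w ^ ((2 : ℂ)⁻¹)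

lemma csqrt_sq (w : ℂ) : (csqrt w) ^ 2 = w := by
  have := Complex.cpow_nat_inv_pow w (n := 2) (by norm_num)
  simpa [csqrt] using this

/-- any square root of `w` has `im² = (|w| - Re w)/2`. -/
lemma im_sq_of_sq_eq {s w : ℂ} (h : s ^ 2 = w) :
    s.im ^ 2 = (‖w‖ - w.re) / 2 := by
  have hre : w.re = s.re ^ 2 - s.im ^ 2 := by
    rw [← h]; simp [pow_two, Complex.mul_re]; try ring
  have habs : ‖w‖ = s.re ^ 2 + s.im ^ 2 := by
    rw [← h, pow_two, norm_mul, ← pow_two, Complex.sq_norm, Complex.normSq_apply]; ring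
  rw [hre, habs]; ring

lemma im_sq_eq_im_sq {s t w : ℂ} (hs : s ^ 2 = w) (ht : t ^ 2 = w) :
    s.im ^ 2 = t.im ^ 2 := by
  rw [im_sq_of_sq_eq hs, im_sq_of_sq_eq ht]

lemma eq_or_eq_neg_of_sq_eq {s t : ℂ} (h : s ^ 2 = t ^ 2) : s = t ∨ s = -t :=
  (Commute.all s t).sq_eq_sq_iff_eq_or_eq_neg.mp h

/-- membership of the strip from the squared bound. -/
lemma mem_strip_of_im_sq_lt {R : ℝ} (hR : 0 < R) {s : ℂ} (h : s.im ^ 2 < R ^ 2) :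
    s ∈ openStrip R := by
  show |s.im| < R
  nlinarith [abs_nonneg s.im, sq_abs s.im]

/-- key inequality: any square root of `∑ λᵢ²` has `im² ≤ ∑ (Im λᵢ)²`. -/
lemma im_sq_root_le {l : ℕ} (lam : Fin l → ℂ) {s : ℂ}
    (h : s ^ 2 = ∑ i, lam i ^ 2) : s.im ^ 2 ≤ ∑ i, (lam i).im ^ 2 := by
  set a := s.re
  set b := s.im
  set X := ∑ i, (lam i).re ^ 2
  set Y := ∑ i, (lam i).im ^ 2
  set P := ∑ i, (lam i).re * (lam i).im
  have hre : a ^ 2 - b ^ 2 = X - Y := by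
    have := congrArg Complex.re h
    simp only [Complex.re_sum] at this
    rw [show (s ^ 2).re = a ^ 2 - b ^ 2 by simp [pow_two, Complex.mul_re]; try ring] at this
    rw [this]
    rw [show X - Y = ∑ i, ((lam i).re ^ 2 - (lam i).im ^ 2) from (Finset.sum_sub_distrib _ _).symm]
    apply Finset.sum_congr rfl
    intro i _
    simp [pow_two, Complex.mul_re]
    try ring
  have him : a * b = P := by
    have := congrArg Complex.im h
    simp only [Complex.im_sum] at this
    rw [show (s ^ 2).im = 2 * (a * b) by simp [pow_two, Complex.mul_im]; try ring] at this
    have h2 : (2 : ℝ) * (a * b) = 2 * P := by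
      rw [this, Finset.mul_sum]
      apply Finset.sum_congr rfl
      intro i _
      simp [pow_two, Complex.mul_im]; ring
    linarith
  have hCS : P ^ 2 ≤ X * Y := by
    simpa [P, X, Y] using
      Finset.sum_mul_sq_le_sq_mul_sq Finset.univ (fun i => (lam i).re) (fun i => (lam i).im)
  have hX : 0 ≤ X := Finset.sum_nonneg fun i _ => sq_nonneg _
  have hY : 0 ≤ Y := Finset.sum_nonneg fun i _ => sq_nonneg _
  have hP : a ^ 2 * b ^ 2 = P ^ 2 := by rw [← him]; ring
  have hX' : X = a ^ 2 - b ^ 2 + Y := by linarith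
  have key : (b ^ 2 - Y) * (b ^ 2 + X) ≤ 0 := by
    have hid : (b ^ 2 - Y) * (b ^ 2 + X) = a ^ 2 * b ^ 2 - X * Y := by rw [hX']; ring
    rw [hid, hP]; linarith
  by_contra hbY
  push_neg at hbY
  have h1 : 0 < b ^ 2 + X := by nlinarith
  have h2 : 0 < (b ^ 2 - Y) * (b ^ 2 + X) := mul_pos (by linarith) h1
  linarith

theorem even_bounded_holomorphic_extends_to_tube {R : ℝ} (hR : 0 < R)
    {l : ℕ} (hl : 1 ≤ l) (g : ℂ → ℂ)
    (hg : DifferentiableOn ℂ g (openStrip R))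
    (heven : ∀ s ∈ openStrip R, g (-s) = g s)
    (hbdd : ∃ C : ℝ, ∀ s ∈ openStrip R, ‖g s‖ ≤ C) :
    ∃ f : (Fin l → ℂ) → ℂ,
      DifferentiableOn ℂ f (tube l R) ∧
      (∀ lam ∈ tube l R, ∀ s ∈ openStrip R, s ^ 2 = ∑ i, lam i ^ 2 → f lam = g s) ∧
      (∀ C : ℝ, (∀ s ∈ openStrip R, ‖g s‖ ≤ C) → ∀ lam ∈ tube l R, ‖f lam‖ ≤ C) := by
  classical
  -- the strip is open
  have hstrip_open : IsOpen (openStrip R) := by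
    have : openStrip R = (fun z : ℂ => |z.im|) ⁻¹' Set.Iio R := rfl
    rw [this]
    exact (continuous_abs.comp Complex.continuous_im).isOpen_preimage _ isOpen_Iio
  -- the parameter domain for h
  set Ω : Set ℂ := {w : ℂ | (‖w‖ - w.re) / 2 < R ^ 2} with hΩdef
  have hΩ_open : IsOpen Ω := by
    have : Ω = (fun w : ℂ => (‖w‖ - w.re) / 2) ⁻¹' Set.Iio (R ^ 2) := rfl
    rw [this]
    exact (((continuous_norm.sub Complex.continuous_re).div_const 2)).isOpen_preimage
      _ isOpen_Iio
  -- roots of elements of Ω lie in the strip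
  have hroot_strip : ∀ w ∈ Ω, ∀ s : ℂ, s ^ 2 = w → s ∈ openStrip R := by
    intro w hw s hs
    apply mem_strip_of_im_sq_lt hR
    rw [im_sq_of_sq_eq hs]
    exact hw
  set h : ℂ → ℂ := fun w => g (csqrt w) with hhdef
  -- differentiability of h away from 0
  have hdiff_ne : ∀ w₀ ∈ Ω, w₀ ≠ 0 → DifferentiableAt ℂ h w₀ := by
    intro w₀ hw₀ hne
    by_cases hslit : w₀ ∈ Complex.slitPlane
    · -- principal branch works
      have h1 : DifferentiableAt ℂ csqrt w₀ :=
        differentiableAt_id.cpow (differentiableAt_const _) hslit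
      have h2 : DifferentiableAt ℂ g (csqrt w₀) :=
        (hg.differentiableAt (hstrip_open.mem_nhds
          (hroot_strip w₀ hw₀ _ (csqrt_sq w₀))))
      exact h2.comp w₀ h1
    · -- on the negative real axis: use the other branch and evenness
      have hns := hslit
      rw [Complex.mem_slitPlane_iff] at hns
      push_neg at hns
      have hre : w₀.re < 0 := by
        rcases lt_or_eq_of_le hns.1 with h | h
        · exact h
        · exact absurd (by apply Complex.ext <;> simp [h, hns.2]) hne
      have hnslit : -w₀ ∈ Complex.slitPlane := Or.inl (by simp [Complex.neg_re]; linarith)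
      set h₂ : ℂ → ℂ := fun w => g (Complex.I * csqrt (-w)) with hh₂def
      have hsq₂ : ∀ w : ℂ, (Complex.I * csqrt (-w)) ^ 2 = w := by
        intro w
        rw [mul_pow, Complex.I_sq, csqrt_sq]
        ring
      have heq : ∀ w ∈ Ω, h w = h₂ w := by
        intro w hw
        have h1 : (csqrt w) ^ 2 = (Complex.I * csqrt (-w)) ^ 2 := by
          rw [csqrt_sq, hsq₂]
        rcases eq_or_eq_neg_of_sq_eq h1 with h | h
        · simp only [hhdef, hh₂def, h]
        · simp only [hhdef, hh₂def, h]
          exact heven _ (hroot_strip w hw _ (hsq₂ w))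
      have hEvEq : h =ᶠ[nhds w₀] h₂ :=
        Filter.eventuallyEq_of_mem (hΩ_open.mem_nhds hw₀) heq
      rw [Filter.EventuallyEq.differentiableAt_iff hEvEq]
      have h1 : DifferentiableAt ℂ (fun w : ℂ => Complex.I * csqrt (-w)) w₀ := by
        apply DifferentiableAt.const_mul
        exact (differentiableAt_id.neg).cpow (differentiableAt_const _) hnslit
      have h2 : DifferentiableAt ℂ g (Complex.I * csqrt (-w₀)) :=
        hg.differentiableAt (hstrip_open.mem_nhds (hroot_strip w₀ hw₀ _ (hsq₂ w₀)))
      exact h2.comp w₀ h1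
  -- h is differentiable on Ω (including at 0, by removable singularity)
  have hh : DifferentiableOn ℂ h Ω := by
    intro w₀ hw₀
    rcases eq_or_ne w₀ 0 with rfl | hne
    · -- removable singularity at 0
      have hcont : ContinuousAt h 0 := by
        have hc1 : ContinuousAt csqrt 0 := by
          have h0 : ContinuousAt (fun p : ℂ × ℂ => p.1 ^ p.2) (((0 : ℂ), (2 : ℂ)⁻¹)) := by
            apply Complex.continuousAt_cpow_zero_of_re_pos
            norm_num
          have hf : ContinuousAt (fun w : ℂ => ((w, (2 : ℂ)⁻¹) : ℂ × ℂ)) 0 :=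
            (continuous_id.prodMk continuous_const).continuousAt
          have hcomp := ContinuousAt.comp (f := fun w : ℂ => ((w, (2 : ℂ)⁻¹) : ℂ × ℂ)) (x := (0 : ℂ)) h0 hf
          exact hcomp
        have h0 : csqrt 0 = 0 := by
          simp [csqrt, Complex.zero_cpow (by norm_num : ((2:ℂ)⁻¹) ≠ 0)]
        have hc2 : ContinuousAt g (csqrt 0) := by
          rw [h0]
          exact (hg.differentiableAt (hstrip_open.mem_nhds
            (by simp [openStrip, hR]))).continuousAt
        exact hc2.comp hc1
      have hpunct : ∀ᶠ z in nhdsWithin 0 {(0:ℂ)}ᶜ, DifferentiableAt ℂ h z := by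
        have hmem : Ω ∈ nhds (0 : ℂ) := hΩ_open.mem_nhds hw₀
        filter_upwards [nhdsWithin_le_nhds hmem, self_mem_nhdsWithin] with z hz hz'
        exact hdiff_ne z hz hz'
      exact (Complex.analyticAt_of_differentiable_on_punctured_nhds_of_continuousAt
        hpunct hcont).differentiableAt.differentiableWithinAt
    · exact (hdiff_ne w₀ hw₀ hne).differentiableWithinAt
  -- the sum-of-squares map
  set S : (Fin l → ℂ) → ℂ := fun lam => ∑ i, lam i ^ 2 with hSdef
  have hS : Differentiable ℂ S := by
    apply Differentiable.fun_sum
    intro i _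
    exact ((ContinuousLinearMap.proj i : (Fin l → ℂ) →L[ℂ] ℂ).differentiable).pow 2
  -- S maps the tube into Ω
  have hmaps : ∀ lam ∈ tube l R, S lam ∈ Ω := by
    intro lam hlam
    have h1 : (csqrt (S lam)) ^ 2 = S lam := csqrt_sq _
    have h2 : (csqrt (S lam)).im ^ 2 ≤ ∑ i, (lam i).im ^ 2 := im_sq_root_le lam h1
    have h3 : ∑ i, (lam i).im ^ 2 < R ^ 2 := by
      have := hlam
      rw [tube, Set.mem_setOf_eq] at this
      have hnn : (0:ℝ) ≤ ∑ i, (lam i).im ^ 2 := Finset.sum_nonneg fun i _ => sq_nonneg _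
      nlinarith [Real.sq_sqrt hnn, Real.sqrt_nonneg (∑ i, (lam i).im ^ 2)]
    have := im_sq_of_sq_eq h1
    rw [hΩdef, Set.mem_setOf_eq, ← this]
    linarith
  refine ⟨fun lam => h (S lam), ?_, ?_, ?_⟩
  · exact hh.comp hS.differentiableOn fun lam hlam => hmaps lam hlam
  · intro lam hlam s hs hsq
    have h1 : (csqrt (S lam)) ^ 2 = s ^ 2 := by rw [csqrt_sq]; exact hsq.symm
    have hroot : csqrt (S lam) ∈ openStrip R :=
      hroot_strip _ (hmaps lam hlam) _ (csqrt_sq _)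
    rcases eq_or_eq_neg_of_sq_eq h1 with h | h
    · simp only [hhdef, h]
    · simp only [hhdef, h]
      exact heven s hs
  · intro C hC lam hlam
    exact hC _ (hroot_strip _ (hmaps lam hlam) _ (csqrt_sq _))
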